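/- In the three-period panel setting, the sequential DID estimator τ̂_sDID equals the coefficient β̂ in the least-squares problem minimizing Σ_i Σ_{t=0}^{2} (Y_{it} − α_i − ξ_i·t − δ_t − β D_{it})² over unit intercepts α, unit-specific linear time trends ξ, time effects δ, and β, where D_{it} = [G i ∧ t = 2]. -/

import Mathlib

open Finset

lemma quad_nonneg_imp {a b : ℝ} (ha : 0 ≤ a) (h : ∀ s : ℝ, 0 ≤ a * s^2 + b * s) : b = 0 := by
  have h2 : (0:ℝ) < 2*a+1 := by linarith
  have hne : (2*a+1) ≠ (0:ℝ) := ne_of_gt h2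
  have h1 := h (-b/(2*a+1))
  have heq : a * (-b/(2*a+1))^2 + b * (-b/(2*a+1)) = (a*b^2 - b^2*(2*a+1))/(2*a+1)^2 := by
    field_simp
    ring
  rw [heq] at h1
  have h4 : 0 ≤ a*b^2 - b^2*(2*a+1) := by
    have hmul := mul_nonneg h1 (sq_nonneg (2*a+1))
    rwa [div_mul_cancel₀ _ (pow_ne_zero 2 hne)] at hmul
  nlinarith [sq_nonneg b]

lemma foc {m : ℕ} (f v : Fin m → Fin 3 → ℝ)
    (h : ∀ s : ℝ, ∑ i, ∑ t, (f i t)^2 ≤ ∑ i, ∑ t, (f i t - s * v i t)^2) :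
    ∑ i, ∑ t, v i t * f i t = 0 := by
  have expand : ∀ s : ℝ, ∑ i, ∑ t, (f i t - s * v i t)^2
      = ∑ i, ∑ t, (f i t)^2 + ((∑ i, ∑ t, (v i t)^2) * s^2
        + (∑ i, ∑ t, (-2 * (v i t * f i t))) * s) := by
    intro s
    simp only [Finset.sum_mul, ← Finset.sum_add_distrib]
    exact Finset.sum_congr rfl fun i _ => Finset.sum_congr rfl fun t _ => by ring
  have key : ∀ s : ℝ, 0 ≤ (∑ i, ∑ t, (v i t)^2) * s^2
      + (∑ i, ∑ t, (-2 * (v i t * f i t))) * s := by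
    intro s
    have hs := h s
    rw [expand s] at hs
    linarith
  have ha : 0 ≤ ∑ i, ∑ t, (v i t)^2 :=
    Finset.sum_nonneg fun i _ => Finset.sum_nonneg fun t _ => sq_nonneg _
  have hb := quad_nonneg_imp ha key
  have hs2 : ∑ i, ∑ t, (-2 * (v i t * f i t)) = -2 * ∑ i, ∑ t, v i t * f i t := by
    simp [Finset.mul_sum]
  rw [hs2] at hb
  linarith

/-- The sequential DID estimator equals the coefficient β̂ in the
two-way fixed effects regression with unit-specific linear time trends. -/
theorem sequential_did_eq_unit_time_trend_regression
    (n : ℕ) (Y : Fin n → Fin 3 → ℝ) (G : Fin n → Bool)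
    (n1 n0 : ℕ)
    (hn1 : n1 = (univ.filter (fun i => G i = true)).card)
    (hn0 : n0 = (univ.filter (fun i => G i = false)).card)
    (hn1pos : 0 < n1) (hn0pos : 0 < n0)
    (D : Fin n → Fin 3 → ℝ)
    (hD : ∀ i t, D i t = if G i = true ∧ t = 2 then (1:ℝ) else 0)
    (α ξ : Fin n → ℝ) (δ : Fin 3 → ℝ) (β : ℝ)
    (hmin : ∀ (α' ξ' : Fin n → ℝ) (δ' : Fin 3 → ℝ) (β' : ℝ),
      ∑ i, ∑ t, (Y i t - α i - ξ i * ((t : ℕ) : ℝ) - δ t - β * D i t)^2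
      ≤ ∑ i, ∑ t, (Y i t - α' i - ξ' i * ((t : ℕ) : ℝ) - δ' t - β' * D i t)^2) :
    ((1 / (n1:ℝ)) * ∑ i ∈ univ.filter (fun i => G i = true), (Y i 2 - Y i 1)
      - (1 / (n0:ℝ)) * ∑ i ∈ univ.filter (fun i => G i = false), (Y i 2 - Y i 1))
    - ((1 / (n1:ℝ)) * ∑ i ∈ univ.filter (fun i => G i = true), (Y i 1 - Y i 0)
      - (1 / (n0:ℝ)) * ∑ i ∈ univ.filter (fun i => G i = false), (Y i 1 - Y i 0))
    = β := by
  set f : Fin n → Fin 3 → ℝ :=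
    fun i t => Y i t - α i - ξ i * ((t : ℕ) : ℝ) - δ t - β * D i t with hf
  -- FOC in the α_j direction
  have E1 : ∀ j, f j 0 + f j 1 + f j 2 = 0 := by
    intro j
    have h := foc f (fun i _ => if i = j then (1:ℝ) else 0) (by
      intro s
      have h0 := hmin (fun i => α i + s * (if i = j then (1:ℝ) else 0)) ξ δ β
      have e : ∑ i, ∑ t, (Y i t - (α i + s * (if i = j then (1:ℝ) else 0))
            - ξ i * ((t : ℕ) : ℝ) - δ t - β * D i t)^2
          = ∑ i, ∑ t, (f i t - s * (if i = j then (1:ℝ) else 0))^2 :=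
        Finset.sum_congr rfl fun i _ => Finset.sum_congr rfl fun t _ => by
          simp only [hf]; ring
      rw [e] at h0
      exact h0)
    rw [Finset.sum_eq_single j (fun i _ hij => by simp [hij]) (by simp)] at h
    simpa [Fin.sum_univ_three] using h
  -- FOC in the ξ_j direction
  have E2 : ∀ j, f j 1 + 2 * f j 2 = 0 := by
    intro j
    have h := foc f (fun i t => (if i = j then (1:ℝ) else 0) * ((t : ℕ) : ℝ)) (by
      intro s
      have h0 := hmin α (fun i => ξ i + s * (if i = j then (1:ℝ) else 0)) δ β
      have e : ∑ i, ∑ t, (Y i t - α i - (ξ i + s * (if i = j then (1:ℝ) else 0))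
            * ((t : ℕ) : ℝ) - δ t - β * D i t)^2
          = ∑ i, ∑ t, (f i t - s * ((if i = j then (1:ℝ) else 0) * ((t : ℕ) : ℝ)))^2 :=
        Finset.sum_congr rfl fun i _ => Finset.sum_congr rfl fun t _ => by
          simp only [hf]; ring
      rw [e] at h0
      exact h0)
    rw [Finset.sum_eq_single j (fun i _ hij => by simp [hij]) (by simp)] at h
    simp only [if_pos rfl, one_mul, Fin.sum_univ_three] at h
    norm_num at h
    linarith
  -- FOC in the δ_2 direction
  have E3 : ∑ i, f i 2 = 0 := by
    have h := foc f (fun _ t => if t = 2 then (1:ℝ) else 0) (by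
      intro s
      have h0 := hmin α ξ (fun t => δ t + s * (if t = 2 then (1:ℝ) else 0)) β
      have e : ∑ i, ∑ t, (Y i t - α i - ξ i * ((t : ℕ) : ℝ)
            - (δ t + s * (if t = 2 then (1:ℝ) else 0)) - β * D i t)^2
          = ∑ i, ∑ t, (f i t - s * (if t = 2 then (1:ℝ) else 0))^2 :=
        Finset.sum_congr rfl fun i _ => Finset.sum_congr rfl fun t _ => by
          simp only [hf]; ring
      rw [e] at h0
      exact h0)
    have e2 : ∀ i : Fin n, ∑ t : Fin 3, (if t = 2 then (1:ℝ) else 0) * f i t = f i 2 := by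
      intro i
      rw [Fin.sum_univ_three]
      norm_num [show ((0:Fin 3) = 2) ↔ False from by decide, show ((1:Fin 3) = 2) ↔ False from by decide]
    rw [Finset.sum_congr rfl (fun i _ => e2 i)] at h
    exact h
  -- FOC in the β direction
  have E4 : ∑ i ∈ univ.filter (fun i => G i = true), f i 2 = 0 := by
    have h := foc f D (by
      intro s
      have h0 := hmin α ξ δ (β + s)
      have e : ∑ i, ∑ t, (Y i t - α i - ξ i * ((t : ℕ) : ℝ) - δ t - (β + s) * D i t)^2
          = ∑ i, ∑ t, (f i t - s * D i t)^2 :=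
        Finset.sum_congr rfl fun i _ => Finset.sum_congr rfl fun t _ => by
          simp only [hf]; ring
      rw [e] at h0
      exact h0)
    have e2 : ∀ i : Fin n, ∑ t : Fin 3, D i t * f i t
        = if G i = true then f i 2 else 0 := by
      intro i
      rw [Fin.sum_univ_three, hD i 0, hD i 1, hD i 2]
      by_cases hG : G i = true <;> simp [hG]
    rw [Finset.sum_congr rfl (fun i _ => e2 i)] at h
    rw [Finset.sum_filter]
    exact h
  -- residual structure per unit
  have hper : ∀ i, f i 0 = f i 2 ∧ f i 1 = -2 * f i 2 := by
    intro i
    have h1 := E1 i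
    have h2 := E2 i
    constructor <;> linarith
  -- second-difference identity
  have key : ∀ i, 6 * f i 2 = (Y i 0 - 2 * Y i 1 + Y i 2) - (δ 0 - 2 * δ 1 + δ 2)
      - β * (if G i = true then (1:ℝ) else 0) := by
    intro i
    have hdef : f i 0 - 2 * f i 1 + f i 2
        = (Y i 0 - 2 * Y i 1 + Y i 2) - (δ 0 - 2 * δ 1 + δ 2)
          - β * (if G i = true then (1:ℝ) else 0) := by
      simp only [hf, hD]
      norm_num
      by_cases hG : G i = true <;> simp [hG] <;> ring
    have h1 := (hper i).1
    have h2 := (hper i).2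
    linarith [hdef]
  -- sums of f i 2 vanish over both groups
  have hFalse : ∑ i ∈ univ.filter (fun i => G i = false), f i 2 = 0 := by
    have hsplit := Finset.sum_filter_add_sum_filter_not univ
      (fun i => G i = true) (fun i => f i 2)
    have hpred : univ.filter (fun i => ¬ (G i = true))
        = univ.filter (fun i => G i = false) := by
      apply Finset.filter_congr
      intro i _
      simp [Bool.not_eq_true]
    rw [hpred] at hsplit
    rw [E3] at hsplit
    linarith [E4, hsplit]
  set Δ : ℝ := δ 0 - 2 * δ 1 + δ 2 with hΔ
  -- sum key over treated group
  have hT : ∑ i ∈ univ.filter (fun i => G i = true), (Y i 0 - 2 * Y i 1 + Y i 2)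
      = (n1 : ℝ) * (Δ + β) := by
    have h6 : ∑ i ∈ univ.filter (fun i => G i = true), (6 * f i 2)
        = ∑ i ∈ univ.filter (fun i => G i = true),
          ((Y i 0 - 2 * Y i 1 + Y i 2) - Δ - β) := by
      apply Finset.sum_congr rfl
      intro i hi
      have hGi : G i = true := by simpa using (Finset.mem_filter.mp hi).2
      have := key i
      rw [hGi] at this
      simp at this
      linarith [this]
    rw [← Finset.mul_sum, E4, Finset.sum_sub_distrib, Finset.sum_sub_distrib,
      Finset.sum_const, Finset.sum_const, ← hn1] at h6
    simp only [nsmul_eq_mul] at h6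
    linarith [h6]
  -- sum key over control group
  have hC : ∑ i ∈ univ.filter (fun i => G i = false), (Y i 0 - 2 * Y i 1 + Y i 2)
      = (n0 : ℝ) * Δ := by
    have h6 : ∑ i ∈ univ.filter (fun i => G i = false), (6 * f i 2)
        = ∑ i ∈ univ.filter (fun i => G i = false),
          ((Y i 0 - 2 * Y i 1 + Y i 2) - Δ) := by
      apply Finset.sum_congr rfl
      intro i hi
      have hGi : G i = false := by simpa using (Finset.mem_filter.mp hi).2
      have := key i
      rw [hGi] at this
      simp at this
      linarith [this]
    rw [← Finset.mul_sum, hFalse, Finset.sum_sub_distrib,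
      Finset.sum_const, ← hn0] at h6
    simp only [nsmul_eq_mul] at h6
    linarith [h6]
  -- conclude
  have hT' : ∑ i ∈ univ.filter (fun i => G i = true), (Y i 2 - Y i 1)
      - ∑ i ∈ univ.filter (fun i => G i = true), (Y i 1 - Y i 0)
      = (n1 : ℝ) * (Δ + β) := by
    rw [← Finset.sum_sub_distrib, ← hT]
    exact Finset.sum_congr rfl fun i _ => by ring
  have hC' : ∑ i ∈ univ.filter (fun i => G i = false), (Y i 2 - Y i 1)
      - ∑ i ∈ univ.filter (fun i => G i = false), (Y i 1 - Y i 0)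
      = (n0 : ℝ) * Δ := by
    rw [← Finset.sum_sub_distrib, ← hC]
    exact Finset.sum_congr rfl fun i _ => by ring
  have hn1ne : (n1 : ℝ) ≠ 0 := Nat.cast_ne_zero.mpr hn1pos.ne'
  have hn0ne : (n0 : ℝ) ≠ 0 := Nat.cast_ne_zero.mpr hn0pos.ne'
  have hgoal : ((1 / (n1:ℝ)) * ∑ i ∈ univ.filter (fun i => G i = true), (Y i 2 - Y i 1)
      - (1 / (n0:ℝ)) * ∑ i ∈ univ.filter (fun i => G i = false), (Y i 2 - Y i 1))
    - ((1 / (n1:ℝ)) * ∑ i ∈ univ.filter (fun i => G i = true), (Y i 1 - Y i 0)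
      - (1 / (n0:ℝ)) * ∑ i ∈ univ.filter (fun i => G i = false), (Y i 1 - Y i 0))
    = (1 / (n1:ℝ)) * (∑ i ∈ univ.filter (fun i => G i = true), (Y i 2 - Y i 1)
        - ∑ i ∈ univ.filter (fun i => G i = true), (Y i 1 - Y i 0))
      - (1 / (n0:ℝ)) * (∑ i ∈ univ.filter (fun i => G i = false), (Y i 2 - Y i 1)
        - ∑ i ∈ univ.filter (fun i => G i = false), (Y i 1 - Y i 0)) := by ring
  rw [hgoal, hT', hC']
  field_simp
  ring
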